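/- Let k > 0, α ∈ (0,1), let φ : [0,∞) → ℝ be differentiable, and let θ : [0,∞) → ℝ be differentiable with θ'(t) = -k·sign(θ(t) - φ(t))·|θ(t) - φ(t)|^α + φ'(t) for all t ≥ 0. Then θ(t) = φ(t) for all t ≥ |θ(0) - φ(0)|^(1-α)/(k·(1-α)). -/

import Mathlib

open Real Filter Asymptotics Set Topology

lemma abs_hasDerivAt_zero' {f : ℝ → ℝ} {t : ℝ} (hf : HasDerivAt f 0 t) (h0 : f t = 0) :
    HasDerivAt (fun s => |f s|) 0 t := by
  rw [hasDerivAt_iff_isLittleO] at hf ⊢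
  simp only [h0, abs_zero, smul_zero, sub_zero] at hf ⊢
  exact hf.abs_left

/-- Finite-time convergence of the orientation error: under
`θ' = -k·sign(θ-φ)·|θ-φ|^α + φ'`, the angle `θ` reaches `φ` by time
`|θ(0)-φ(0)|^(1-α)/(k(1-α))`. -/
theorem stmt_5 (k α : ℝ) (hk : 0 < k) (hα0 : 0 < α) (hα1 : α < 1)
    (φ : ℝ → ℝ) (hφ : ∀ t, 0 ≤ t → DifferentiableAt ℝ φ t)
    (θ : ℝ → ℝ)
    (hθ : ∀ t, 0 ≤ t →
      HasDerivAt θ (-k * Real.sign (θ t - φ t) * |θ t - φ t| ^ α + deriv φ t) t) :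
    ∀ t, |θ 0 - φ 0| ^ (1 - α) / (k * (1 - α)) ≤ t → θ t = φ t := by
  have h1α : 0 < 1 - α := by linarith
  set e : ℝ → ℝ := fun s => θ s - φ s with he_def
  have he : ∀ t, 0 ≤ t → HasDerivAt e (-k * Real.sign (e t) * |e t| ^ α) t := by
    intro t ht
    have := (hθ t ht).sub ((hφ t ht).hasDerivAt)
    exact this.congr_deriv (by simp [e])
  set u : ℝ → ℝ := fun s => |e s| with hu_def
  have hu0 : ∀ s, 0 ≤ u s := fun s => abs_nonneg _
  have hu : ∀ t, 0 ≤ t → HasDerivAt u (-k * u t ^ α) t := by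
    intro t ht
    rcases lt_trichotomy (e t) 0 with hlt | heq | hgt
    · have hne : HasDerivAt (fun s => -e s) (-(-k * Real.sign (e t) * |e t| ^ α)) t :=
        (he t ht).neg
      have hev : (fun s => -e s) =ᶠ[𝓝 t] u := by
        have : ∀ᶠ s in 𝓝 t, e s < 0 :=
          (he t ht).continuousAt.eventually_lt continuousAt_const hlt
        filter_upwards [this] with s hs
        exact (abs_of_neg hs).symm
      have := hne.congr_of_eventuallyEq hev.symm
      refine this.congr_deriv ?_
      rw [Real.sign_of_neg hlt]
      show _ = -k * |e t| ^ α
      ring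
    · have h0 : (-k * Real.sign (e t) * |e t| ^ α) = 0 := by
        rw [heq, Real.sign_zero]; ring
      have habs := abs_hasDerivAt_zero' (h0 ▸ he t ht) heq
      have hut : u t = 0 := by simp [hu_def, heq]
      rw [hut, Real.zero_rpow (ne_of_gt hα0), mul_zero]
      exact habs
    · have hev : e =ᶠ[𝓝 t] u := by
        have : ∀ᶠ s in 𝓝 t, 0 < e s :=
          continuousAt_const.eventually_lt (he t ht).continuousAt hgt
        filter_upwards [this] with s hs
        exact (abs_of_pos hs).symm
      have := (he t ht).congr_of_eventuallyEq hev.symm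
      refine this.congr_deriv ?_
      rw [Real.sign_of_pos hgt]
      show _ = -k * |e t| ^ α
      ring
  -- u is antitone on [0, ∞)
  have hcont : ContinuousOn u (Ici (0:ℝ)) := fun s hs => ((hu s hs).continuousAt).continuousWithinAt
  have hanti : AntitoneOn u (Ici (0:ℝ)) := by
    apply antitoneOn_of_deriv_nonpos (convex_Ici 0) hcont
    · intro s hs
      rw [interior_Ici] at hs
      exact ((hu s (le_of_lt hs)).differentiableAt).differentiableWithinAt
    · intro s hs
      rw [interior_Ici] at hs
      rw [(hu s (le_of_lt hs)).deriv]
      have : (0:ℝ) ≤ u s ^ α := Real.rpow_nonneg (hu0 s) α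
      nlinarith
  intro t hTt
  have hT0 : (0:ℝ) ≤ |θ 0 - φ 0| ^ (1 - α) / (k * (1 - α)) := by
    apply div_nonneg (Real.rpow_nonneg (abs_nonneg _) _)
    positivity
  have ht0 : (0:ℝ) ≤ t := le_trans hT0 hTt
  -- main claim : u t = 0
  have hmain : u t = 0 := by
    by_contra h
    have hpos : 0 < u t := lt_of_le_of_ne (hu0 t) (Ne.symm h)
    -- u > 0 on [0, t]
    have hposall : ∀ s ∈ Icc (0:ℝ) t, 0 < u s := by
      intro s hs
      exact lt_of_lt_of_le hpos (hanti hs.1 (mem_Ici.mpr ht0) hs.2)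
    -- g = u^(1-α) + k(1-α)·s is antitone on [0,t]
    set g : ℝ → ℝ := fun s => u s ^ (1 - α) + k * (1 - α) * s with hg_def
    have hg' : ∀ s ∈ Icc (0:ℝ) t, HasDerivAt g 0 s := by
      intro s hs
      have hus : 0 < u s := hposall s hs
      have h1 : HasDerivAt (fun s => u s ^ (1 - α))
          ((1 - α) * u s ^ (-α) * (-k * u s ^ α)) s := by
        have := (Real.hasStrictDerivAt_rpow_const_of_ne (ne_of_gt hus) (1 - α)).hasDerivAt
        exact (HasDerivAt.comp s (by simpa using this) (hu s hs.1) : _)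
      have h2 : HasDerivAt (fun s => k * (1 - α) * s) (k * (1 - α)) s := by
        simpa using (hasDerivAt_id s).const_mul (k * (1 - α))
      have := h1.add h2
      refine this.congr_deriv ?_
      have : u s ^ (-α) * u s ^ α = 1 := by
        rw [← Real.rpow_add hus]
        norm_num
      linear_combination -(k * (1 - α)) * this
    have hganti : AntitoneOn g (Icc 0 t) := by
      apply antitoneOn_of_deriv_nonpos (convex_Icc 0 t)
        (fun s hs => ((hg' s hs).continuousAt).continuousWithinAt)
      · intro s hs
        exact ((hg' s (interior_subset hs)).differentiableAt).differentiableWithinAt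
      · intro s hs
        rw [(hg' s (interior_subset hs)).deriv]
    have hle : g t ≤ g 0 := hganti (left_mem_Icc.mpr ht0) (right_mem_Icc.mpr ht0) ht0
    have hgt0 : 0 < u t ^ (1 - α) := Real.rpow_pos_of_pos hpos _
    have hu00 : u 0 = |θ 0 - φ 0| := rfl
    have : k * (1 - α) * t < u 0 ^ (1 - α) := by
      simp only [hg_def, mul_zero, add_zero] at hle
      nlinarith
    have hklt : 0 < k * (1 - α) := by positivity
    rw [hu00] at this
    have : t < |θ 0 - φ 0| ^ (1 - α) / (k * (1 - α)) := by
      rw [lt_div_iff₀ hklt]; linarith [this]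
    linarith
  have : e t = 0 := abs_eq_zero.mp hmain
  have := sub_eq_zero.mp this
  exact this
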